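/- Suppose α : ℤ^d → (0,1) is such that ν_α is stationary for the translation-invariant exclusion process on ℤ^d, and u ∈ ℤ^d satisfies p(u) > 0. (a) If p(−u) = 0, then π(x+u) = π(x) for all x ∈ ℤ^d. (b) If p(−u) > 0, then, setting λ = p(u)/p(−u), for each x ∈ ℤ^d either π(x+nu) = π(x) for all n ∈ ℤ, or π(x+nu) = π(x)·λⁿ for all n ∈ ℤ. -/

import Mathlib

set_option linter.unusedSectionVars false
set_option linter.unusedVariables false
set_option maxHeartbeats 1000000

open MeasureTheory Filter Topology

namespace ExclusionPaper

abbrev Zd (d : ℕ) := Fin d → ℤ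

abbrev Conf (d : ℕ) := Zd d → Bool

noncomputable def ind (b : Bool) : ℝ := if b then 1 else 0

def swap {d : ℕ} (η : Conf d) (x y : Zd d) : Conf d :=
  fun z => if z = x then η y else if z = y then η x else η z

def IsCylinder {d : ℕ} (f : Conf d → ℝ) : Prop :=
  ∃ F : Finset (Zd d), ∀ η η' : Conf d, (∀ x ∈ F, η x = η' x) → f η = f η'

noncomputable def gen {d : ℕ} (p : Zd d → ℝ) (f : Conf d → ℝ) (η : Conf d) : ℝ :=
  ∑' x : Zd d, ∑' y : Zd d,
    p (y - x) * ind (η x) * (1 - ind (η y)) * (f (swap η x y) - f η)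

def IsStationary {d : ℕ} (p : Zd d → ℝ) (μ : Measure (Conf d)) : Prop :=
  ∀ f : Conf d → ℝ, IsCylinder f → ∫ η, gen p f η ∂μ = 0

def IsProductWith {d : ℕ} (α : Zd d → ℝ) (μ : Measure (Conf d)) : Prop :=
  IsProbabilityMeasure μ ∧
  ∀ F : Finset (Zd d), ∀ b : Zd d → Bool,
    μ {η : Conf d | ∀ x ∈ F, η x = b x} =
      ∏ x ∈ F, ENNReal.ofReal (if b x then α x else 1 - α x)

noncomputable def pifun {d : ℕ} (α : Zd d → ℝ) (x : Zd d) : ℝ := α x / (1 - α x)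

def innerZ {d : ℕ} (x y : Zd d) : ℤ := ∑ i, x i * y i

noncomputable def innerR {d : ℕ} (x : Zd d) (v : Fin d → ℝ) : ℝ := ∑ i, (x i : ℝ) * v i

/-! ### ind lemmas -/

lemma ind_nonneg (a : Bool) : 0 ≤ ind a := by cases a <;> simp [ind]
lemma ind_le_one (a : Bool) : ind a ≤ 1 := by cases a <;> simp [ind]
lemma one_sub_ind_nonneg (a : Bool) : 0 ≤ 1 - ind a := by cases a <;> simp [ind]
lemma ind_self_mul (a : Bool) : ind a * (1 - ind a) = 0 := by cases a <;> simp [ind]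
lemma ind_key1 (a b : Bool) : ind a * (1 - ind b) * (ind b - ind a) = -(ind a * (1 - ind b)) := by
  cases a <;> cases b <;> simp [ind]
lemma ind_key2 (a b : Bool) : ind a * (1 - ind b) * (ind a - ind b) = ind a * (1 - ind b) := by
  cases a <;> cases b <;> simp [ind]

lemma swap_self {d : ℕ} (η : Conf d) (x : Zd d) : swap η x x = η := by
  funext z; simp only [swap]; split_ifs with h <;> simp [h]

lemma swap_apply_notmem {d : ℕ} (η : Conf d) (x y z : Zd d) (hx : z ≠ x) (hy : z ≠ y) :
    swap η x y z = η z := by simp [swap, hx, hy]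

lemma swap_apply_fst {d : ℕ} (η : Conf d) (x y : Zd d) : swap η x y x = η y := by simp [swap]

lemma swap_apply_snd {d : ℕ} (η : Conf d) (x y : Zd d) (h : y ≠ x) : swap η x y y = η x := by
  simp [swap, h]

/-! ### summability -/

section P
variable {d : ℕ} {p : Zd d → ℝ} (hp0 : ∀ z, 0 ≤ p z) (hp1 : ∑' z : Zd d, p z = 1)

include hp1 in
lemma summable_p : Summable p := by
  by_contra h
  rw [tsum_eq_zero_of_not_summable h] at hp1
  norm_num at hp1

include hp1 in
lemma summable_p_shift_left (w : Zd d) : Summable (fun x : Zd d => p (w - x)) :=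
  (Equiv.subLeft w).summable_iff.2 (summable_p hp1)

include hp1 in
lemma summable_p_shift_right (w : Zd d) : Summable (fun x : Zd d => p (x - w)) :=
  (Equiv.subRight w).summable_iff.2 (summable_p hp1)

include hp1 in
lemma tsum_p_shift_right (w : Zd d) : ∑' x : Zd d, p (x - w) = 1 := by
  rw [← hp1]; exact (Equiv.subRight w).tsum_eq p

include hp1 in
lemma tsum_p_shift_left (w : Zd d) : ∑' x : Zd d, p (w - x) = 1 := by
  rw [← hp1]; exact (Equiv.subLeft w).tsum_eq p

end P

/-! ### measurability -/

lemma measurable_ind_eval {d : ℕ} (x : Zd d) : Measurable (fun η : Conf d => ind (η x)) :=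
  (measurable_of_countable ind).comp (measurable_pi_apply x)

lemma measurable_tsum {ι X : Type*} [Countable ι] [MeasurableSpace X] {g : ι → X → ℝ}
    (hg : ∀ i, Measurable (g i)) (hs : ∀ x, Summable fun i => g i x) :
    Measurable (fun x => ∑' i, g i x) := by
  classical
  apply measurable_of_tendsto_metrizable' (atTop : Filter (Finset ι))
    (fun s => Finset.measurable_sum s (fun i _ => hg i))
  rw [tendsto_pi_nhds]
  intro x
  exact (hs x).hasSum


section INT
variable {d : ℕ} {α : Zd d → ℝ} {μ : Measure (Conf d)}
  (hα : ∀ x, α x ∈ Set.Ioo (0 : ℝ) 1) (hμ : IsProductWith α μ)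

lemma measurableSet_cyl (F : Finset (Zd d)) (b : Zd d → Bool) :
    MeasurableSet {η : Conf d | ∀ x ∈ F, η x = b x} := by
  have : {η : Conf d | ∀ x ∈ F, η x = b x} = ⋂ x ∈ F, (fun η : Conf d => η x) ⁻¹' {b x} := by
    ext η; simp
  rw [this]
  exact MeasurableSet.biInter F.countable_toSet
    (fun x _ => (measurable_pi_apply x) (measurableSet_singleton (b x)))

lemma prod_eq_indicator (F : Finset (Zd d)) (b : Zd d → Bool) (η : Conf d) :
    (∏ x ∈ F, if η x = b x then (1:ℝ) else 0) =
      Set.indicator {η : Conf d | ∀ x ∈ F, η x = b x} (fun _ => (1:ℝ)) η := by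
  classical
  by_cases h : ∀ x ∈ F, η x = b x
  · rw [Set.indicator_of_mem (show η ∈ {η : Conf d | ∀ x ∈ F, η x = b x} from h)]
    exact Finset.prod_eq_one (fun x hx => by simp [h x hx])
  · rw [Set.indicator_of_notMem (show η ∉ {η : Conf d | ∀ x ∈ F, η x = b x} from h)]
    push_neg at h
    obtain ⟨x, hx, hne⟩ := h
    exact Finset.prod_eq_zero hx (by simp [hne])

include hα hμ in
lemma integral_prod_ind (F : Finset (Zd d)) (b : Zd d → Bool) :
    ∫ η, (∏ x ∈ F, if η x = b x then (1:ℝ) else 0) ∂μ =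
      ∏ x ∈ F, (if b x then α x else 1 - α x) := by
  have hmeas := measurableSet_cyl F b
  calc ∫ η, (∏ x ∈ F, if η x = b x then (1:ℝ) else 0) ∂μ
      = ∫ η, Set.indicator {η : Conf d | ∀ x ∈ F, η x = b x} (fun _ => (1:ℝ)) η ∂μ := by
        exact integral_congr_ae (Filter.EventuallyEq.of_eq (funext (prod_eq_indicator F b)))
    _ = (μ {η : Conf d | ∀ x ∈ F, η x = b x}).toReal • (1:ℝ) := integral_indicator_const 1 hmeas
    _ = ∏ x ∈ F, (if b x then α x else 1 - α x) := by
        rw [hμ.2 F b, smul_eq_mul, mul_one, ENNReal.toReal_prod]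
        refine Finset.prod_congr rfl (fun x _ => ENNReal.toReal_ofReal ?_)
        rcases (hα x) with ⟨h1, h2⟩
        split_ifs <;> linarith

include hμ in
lemma integrable_prod_ind (F : Finset (Zd d)) (b : Zd d → Bool) :
    Integrable (fun η => ∏ x ∈ F, if η x = b x then (1:ℝ) else 0) μ := by
  have : IsProbabilityMeasure μ := hμ.1
  rw [show (fun η => ∏ x ∈ F, if η x = b x then (1:ℝ) else 0) =
    Set.indicator {η : Conf d | ∀ x ∈ F, η x = b x} (fun _ => (1:ℝ)) from
    funext (prod_eq_indicator F b)]
  exact (integrable_const 1).indicator (measurableSet_cyl F b)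

end INT

section EXP
variable {d : ℕ} {α : Zd d → ℝ} {μ : Measure (Conf d)}
  (hα : ∀ x, α x ∈ Set.Ioo (0 : ℝ) 1) (hμ : IsProductWith α μ)

lemma pair_fun_eq {x w : Zd d} (hxw : x ≠ w) :
    (fun η : Conf d => ind (η x) * (1 - ind (η w))) =
    (fun η : Conf d => ∏ z ∈ ({x, w} : Finset (Zd d)),
      if η z = (fun z => if z = x then true else false) z then (1:ℝ) else 0) := by
  classical
  funext η
  rw [Finset.prod_pair hxw]
  simp only [if_pos rfl, if_neg hxw.symm]
  cases hx : η x <;> cases hw : η w <;> simp [ind, hx, hw]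

include hα hμ in
lemma exp_pair {x w : Zd d} (hxw : x ≠ w) :
    ∫ η, ind (η x) * (1 - ind (η w)) ∂μ = α x * (1 - α w) := by
  classical
  rw [show (fun η : Conf d => ind (η x) * (1 - ind (η w))) = _ from pair_fun_eq hxw]
  rw [integral_prod_ind hα hμ, Finset.prod_pair hxw]
  simp [hxw.symm]

include hμ in
lemma integrable_pair {x w : Zd d} (hxw : x ≠ w) :
    Integrable (fun η : Conf d => ind (η x) * (1 - ind (η w))) μ := by
  classical
  rw [pair_fun_eq hxw]
  exact integrable_prod_ind hμ _ _

lemma triple_fun_eq {x v w : Zd d} (hxv : x ≠ v) (hxw : x ≠ w) (hvw : v ≠ w) :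
    (fun η : Conf d => ind (η x) * (1 - ind (η v)) * ind (η w)) =
    (fun η : Conf d => ∏ z ∈ ({x, v, w} : Finset (Zd d)),
      if η z = (fun z => if z = v then false else true) z then (1:ℝ) else 0) := by
  classical
  funext η
  rw [show ({x, v, w} : Finset (Zd d)) = insert x {v, w} from rfl,
    Finset.prod_insert (by simp [hxv, hxw]), Finset.prod_pair hvw]
  simp only [if_pos rfl, if_neg hxv, if_neg hvw.symm]
  cases hx : η x <;> cases hv : η v <;> cases hw : η w <;> simp [ind, hx, hv, hw]

include hα hμ in
lemma exp_triple {x v w : Zd d} (hxv : x ≠ v) (hxw : x ≠ w) (hvw : v ≠ w) :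
    ∫ η, ind (η x) * (1 - ind (η v)) * ind (η w) ∂μ = α x * (1 - α v) * α w := by
  classical
  rw [show (fun η : Conf d => ind (η x) * (1 - ind (η v)) * ind (η w)) = _ from
    triple_fun_eq hxv hxw hvw]
  rw [integral_prod_ind hα hμ,
    show ({x, v, w} : Finset (Zd d)) = insert x {v, w} from rfl,
    Finset.prod_insert (by simp [hxv, hxw]), Finset.prod_pair hvw]
  simp [hxv, hvw.symm, mul_assoc]

include hμ in
lemma integrable_triple {x v w : Zd d} (hxv : x ≠ v) (hxw : x ≠ w) (hvw : v ≠ w) :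
    Integrable (fun η : Conf d => ind (η x) * (1 - ind (η v)) * ind (η w)) μ := by
  classical
  rw [triple_fun_eq hxv hxw hvw]
  exact integrable_prod_ind hμ _ _

end EXP

/-! ### more ind bounds -/

lemma ind_pair_nonneg (a b : Bool) : 0 ≤ ind a * (1 - ind b) := by
  cases a <;> cases b <;> norm_num [ind]
lemma ind_pair_le_one (a b : Bool) : ind a * (1 - ind b) ≤ 1 := by
  cases a <;> cases b <;> norm_num [ind]

/-! ### lintegral bound helpers -/

lemma lintegral_nnnorm_le_of_bound {X : Type*} [MeasurableSpace X] (μ : Measure X)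
    [IsProbabilityMeasure μ] {f : X → ℝ} {c : ℝ} (h : ∀ x, ‖f x‖ ≤ c) :
    ∫⁻ x, (‖f x‖₊ : ENNReal) ∂μ ≤ ENNReal.ofReal c := by
  calc ∫⁻ x, (‖f x‖₊ : ENNReal) ∂μ ≤ ∫⁻ _, ENNReal.ofReal c ∂μ :=
        lintegral_mono (fun x => by
          show ‖f x‖ₑ ≤ _; rw [← ofReal_norm]; exact ENNReal.ofReal_le_ofReal (h x))
    _ = ENNReal.ofReal c := by simp

lemma tsum_lintegral_ne_top {X : Type*} [MeasurableSpace X] (μ : Measure X)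
    [IsProbabilityMeasure μ] {ι : Type*} [Countable ι] {C : ι → X → ℝ} {b : ι → ℝ}
    (hb0 : ∀ i, 0 ≤ b i) (hb : Summable b) (h : ∀ i x, ‖C i x‖ ≤ b i) :
    ∑' i, ∫⁻ x, (‖C i x‖₊ : ENNReal) ∂μ ≠ ⊤ := by
  refine ne_top_of_le_ne_top (b := ∑' i, ENNReal.ofReal (b i)) ?_ ?_
  · rw [← ENNReal.ofReal_tsum_of_nonneg hb0 hb]
    exact ENNReal.ofReal_ne_top
  · exact ENNReal.tsum_le_tsum (fun i => lintegral_nnnorm_le_of_bound μ (h i))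

section GEN1
variable {d : ℕ} {p : Zd d → ℝ} {α : Zd d → ℝ} {μ : Measure (Conf d)}

/-- the summand family for the one-point function -/
noncomputable def C1 (p : Zd d → ℝ) (w : Zd d) (x : Zd d) (η : Conf d) : ℝ :=
  if x = w then -(∑' y : Zd d, p (y - w) * (ind (η w) * (1 - ind (η y))))
  else p (w - x) * (ind (η x) * (1 - ind (η w)))

lemma C1_self (w : Zd d) (η : Conf d) :
    C1 p w w η = -(∑' y : Zd d, p (y - w) * (ind (η w) * (1 - ind (η y)))) := if_pos rfl

lemma C1_ne {w x : Zd d} (hxw : x ≠ w) (η : Conf d) :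
    C1 p w x η = p (w - x) * (ind (η x) * (1 - ind (η w))) := if_neg hxw

variable (hp0 : ∀ z, 0 ≤ p z) (hp1 : ∑' z : Zd d, p z = 1)

include hp0 hp1 in
lemma gen_one_point (w : Zd d) (η : Conf d) :
    gen p (fun η => ind (η w)) η = ∑' x : Zd d, C1 p w x η := by
  classical
  unfold gen
  refine tsum_congr (fun x => ?_)
  by_cases hxw : x = w
  · subst hxw
    rw [C1_self, ← tsum_neg]
    refine tsum_congr (fun y => ?_)
    show p (y - x) * ind (η x) * (1 - ind (η y)) * (ind (swap η x y x) - ind (η x))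
      = -(p (y - x) * (ind (η x) * (1 - ind (η y))))
    rw [swap_apply_fst]
    rw [show p (y - x) * ind (η x) * (1 - ind (η y)) * (ind (η y) - ind (η x))
      = p (y - x) * (ind (η x) * (1 - ind (η y)) * (ind (η y) - ind (η x))) from by ring,
      ind_key1]
    ring
  · rw [C1_ne hxw]
    rw [tsum_eq_single w ?_]
    · show p (w - x) * ind (η x) * (1 - ind (η w)) * (ind (swap η x w w) - ind (η w))
        = p (w - x) * (ind (η x) * (1 - ind (η w)))
      rw [swap_apply_snd η x w (fun h => hxw h.symm)]
      rw [show p (w - x) * ind (η x) * (1 - ind (η w)) * (ind (η x) - ind (η w))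
        = p (w - x) * (ind (η x) * (1 - ind (η w)) * (ind (η x) - ind (η w))) from by ring,
        ind_key2]
    · intro y hyw
      show p (y - x) * ind (η x) * (1 - ind (η y)) * (ind (swap η x y w) - ind (η w)) = 0
      by_cases hyx : y = x
      · subst hyx; rw [swap_self]; ring_nf
      · rw [swap_apply_notmem η x y w (fun h => hxw h.symm) (fun h => hyw h.symm)]
        ring_nf

include hp0 hp1 in
lemma C1_meas (w x : Zd d) : Measurable (C1 p w x) := by
  classical
  by_cases hxw : x = w
  · subst hxw
    have : C1 p x x = fun η => -(∑' y : Zd d, p (y - x) * (ind (η x) * (1 - ind (η y)))) :=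
      funext (fun η => C1_self x η)
    rw [this]
    apply Measurable.neg
    apply measurable_tsum
    · intro y
      exact (measurable_const.mul ((measurable_ind_eval _).mul
        (measurable_const.sub (measurable_ind_eval _))))
    · intro η
      exact Summable.of_nonneg_of_le
        (fun y => mul_nonneg (hp0 _) (ind_pair_nonneg _ _))
        (fun y => mul_le_of_le_one_right (hp0 _) (ind_pair_le_one _ _))
        (summable_p_shift_right hp1 x)
  · have : C1 p w x = fun η => p (w - x) * (ind (η x) * (1 - ind (η w))) :=
      funext (fun η => C1_ne hxw η)
    rw [this]
    exact measurable_const.mul ((measurable_ind_eval _).mul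
      (measurable_const.sub (measurable_ind_eval _)))

include hp0 hp1 in
lemma C1_bound (w x : Zd d) (η : Conf d) :
    ‖C1 p w x η‖ ≤ (if x = w then 1 else p (w - x)) := by
  classical
  by_cases hxw : x = w
  · subst hxw
    rw [C1_self, if_pos rfl, norm_neg]
    rw [Real.norm_eq_abs, abs_of_nonneg (tsum_nonneg (fun y =>
      mul_nonneg (hp0 _) (ind_pair_nonneg _ _)))]
    calc (∑' y : Zd d, p (y - x) * (ind (η x) * (1 - ind (η y))))
        ≤ ∑' y : Zd d, p (y - x) := by
          apply Summable.tsum_le_tsum (fun y =>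
            mul_le_of_le_one_right (hp0 _) (ind_pair_le_one _ _)) ?_ ?_
          · exact Summable.of_nonneg_of_le
              (fun y => mul_nonneg (hp0 _) (ind_pair_nonneg _ _))
              (fun y => mul_le_of_le_one_right (hp0 _) (ind_pair_le_one _ _))
              (summable_p_shift_right hp1 x)
          · exact summable_p_shift_right hp1 x
      _ = 1 := tsum_p_shift_right hp1 x
  · rw [C1_ne hxw, if_neg hxw]
    rw [Real.norm_eq_abs, abs_of_nonneg (mul_nonneg (hp0 _) (ind_pair_nonneg _ _))]
    exact mul_le_of_le_one_right (hp0 _) (ind_pair_le_one _ _)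

/-- bound function for C1 family -/
noncomputable def bnd1 (p : Zd d → ℝ) (w : Zd d) (x : Zd d) : ℝ := if x = w then 1 else p (w - x)

include hp0 in
lemma bnd1_nonneg (w x : Zd d) : 0 ≤ bnd1 p w x := by
  unfold bnd1; split_ifs <;> [norm_num; exact hp0 _]

include hp1 in
lemma bnd1_summable (w : Zd d) : Summable (bnd1 p w) := by
  classical
  have h1 : Summable (fun x : Zd d => p (w - x)) := summable_p_shift_left hp1 w
  have h2 : Summable (fun x : Zd d => if x = w then 1 - p (w - w) else 0) :=
    (hasSum_ite_eq w (1 - p (w - w))).summable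
  have : bnd1 p w = fun x => p (w - x) + (if x = w then 1 - p (w - w) else 0) := by
    funext x
    unfold bnd1
    by_cases hxw : x = w
    · subst hxw; simp
    · simp [hxw]
  rw [this]
  exact h1.add h2

/-- the r-functions appearing in the one-point equation -/
noncomputable def r1 (p α : Zd d → ℝ) (w x : Zd d) : ℝ :=
  if x = w then 0 else p (w - x) * (α x * (1 - α w))
noncomputable def r2 (p α : Zd d → ℝ) (w y : Zd d) : ℝ :=
  if y = w then 0 else p (y - w) * (α w * (1 - α y))

variable (hα : ∀ x, α x ∈ Set.Ioo (0 : ℝ) 1)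

include hp0 hα in
lemma r1_nonneg (w x : Zd d) : 0 ≤ r1 p α w x := by
  unfold r1; split_ifs with h
  · exact le_refl 0
  · have h1 := (hα x).1; have h2 := (hα w).2
    exact mul_nonneg (hp0 _) (mul_nonneg (le_of_lt h1) (by linarith))

include hp0 hα in
lemma r2_nonneg (w y : Zd d) : 0 ≤ r2 p α w y := by
  unfold r2; split_ifs with h
  · exact le_refl 0
  · have h1 := (hα w).1; have h2 := (hα y).2
    exact mul_nonneg (hp0 _) (mul_nonneg (le_of_lt h1) (by linarith))

include hp0 hp1 hα in
lemma r1_summable (w : Zd d) : Summable (r1 p α w) := by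
  apply Summable.of_nonneg_of_le (r1_nonneg hp0 hα w) ?_
    (summable_p_shift_left hp1 w)
  intro x
  unfold r1; split_ifs with h
  · exact hp0 _
  · apply mul_le_of_le_one_right (hp0 _)
    have h1 := (hα x); have h2 := (hα w)
    rw [Set.mem_Ioo] at h1 h2
    nlinarith [h1.1, h1.2, h2.1, h2.2]

include hp0 hp1 hα in
lemma r2_summable (w : Zd d) : Summable (r2 p α w) := by
  apply Summable.of_nonneg_of_le (r2_nonneg hp0 hα w) ?_
    (summable_p_shift_right hp1 w)
  intro x
  unfold r2; split_ifs with h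
  · exact hp0 _
  · apply mul_le_of_le_one_right (hp0 _)
    have h1 := (hα x); have h2 := (hα w)
    rw [Set.mem_Ioo] at h1 h2
    nlinarith [h1.1, h1.2, h2.1, h2.2]

variable (hμ : IsProductWith α μ)

include hp0 hp1 hα hμ in
lemma integral_C1_ne (w x : Zd d) (hxw : x ≠ w) :
    ∫ η, C1 p w x η ∂μ = r1 p α w x := by
  have : (fun η => C1 p w x η) = fun η => p (w - x) * (ind (η x) * (1 - ind (η w))) :=
    funext (fun η => C1_ne hxw η)
  rw [show C1 p w x = fun η => p (w - x) * (ind (η x) * (1 - ind (η w))) from this]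
  unfold r1
  rw [if_neg hxw, integral_const_mul, exp_pair hα hμ hxw]

include hp0 hp1 hα hμ in
lemma integral_C1_eq (w : Zd d) :
    ∫ η, C1 p w w η ∂μ = -(∑' y : Zd d, r2 p α w y) := by
  have : IsProbabilityMeasure μ := hμ.1
  have key : ∫ η, (∑' y : Zd d, p (y - w) * (ind (η w) * (1 - ind (η y)))) ∂μ
      = ∑' y : Zd d, r2 p α w y := by
    rw [integral_tsum ?_ ?_]
    · refine tsum_congr (fun y => ?_)
      unfold r2
      by_cases hyw : y = w
      · subst hyw
        rw [if_pos rfl]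
        have : (fun η : Conf d => p (y - y) * (ind (η y) * (1 - ind (η y)))) = fun _ => 0 := by
          funext η; rw [ind_self_mul]; ring
        rw [this, integral_zero]
      · rw [if_neg hyw, integral_const_mul, exp_pair hα hμ (fun h => hyw h.symm)]
    · intro y
      exact (measurable_const.mul ((measurable_ind_eval _).mul
        (measurable_const.sub (measurable_ind_eval _)))).aestronglyMeasurable
    · apply tsum_lintegral_ne_top μ (b := fun y : Zd d => p (y - w))
        (fun y => hp0 _) (summable_p_shift_right hp1 w)
      intro y η
      rw [Real.norm_eq_abs, abs_of_nonneg (mul_nonneg (hp0 _) (ind_pair_nonneg _ _))]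
      exact mul_le_of_le_one_right (hp0 _) (ind_pair_le_one _ _)
  rw [show C1 p w w = fun η =>
      -(∑' y : Zd d, p (y - w) * (ind (η w) * (1 - ind (η y)))) from
    funext (fun η => C1_self w η)]
  rw [integral_neg, key]

include hp0 hp1 hα hμ in
lemma stationary_one_point (hstat : IsStationary p μ) (w : Zd d) :
    ∑' x : Zd d, r1 p α w x = ∑' x : Zd d, r2 p α w x := by
  classical
  have : IsProbabilityMeasure μ := hμ.1
  have hcyl : IsCylinder (fun η : Conf d => ind (η w)) := by
    refine ⟨{w}, fun η η' h => ?_⟩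
    exact congrArg ind (h w (Finset.mem_singleton_self w))
  have h0 : ∫ η, gen p (fun η => ind (η w)) η ∂μ = 0 := hstat _ hcyl
  have hrw : ∫ η, (∑' x : Zd d, C1 p w x η) ∂μ = 0 := by
    rw [← h0]
    exact integral_congr_ae (Filter.EventuallyEq.of_eq
      (funext (fun η => (gen_one_point hp0 hp1 w η).symm)))
  rw [integral_tsum (fun x => (C1_meas hp0 hp1 w x).aestronglyMeasurable)
    (tsum_lintegral_ne_top μ (bnd1_nonneg hp0 w) (bnd1_summable hp1 w)
      (fun x η => C1_bound hp0 hp1 w x η))] at hrw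
  have heq : ∀ x : Zd d, ∫ η, C1 p w x η ∂μ
      = r1 p α w x + (if x = w then -(∑' y : Zd d, r2 p α w y) else 0) := by
    intro x
    by_cases hxw : x = w
    · subst hxw
      rw [integral_C1_eq hp0 hp1 hα hμ, if_pos rfl]
      unfold r1; rw [if_pos rfl]; ring
    · rw [integral_C1_ne hp0 hp1 hα hμ w x hxw, if_neg hxw, add_zero]
  rw [tsum_congr heq] at hrw
  rw [Summable.tsum_add (r1_summable hp0 hp1 hα w)
    ((hasSum_ite_eq w (-(∑' y : Zd d, r2 p α w y))).summable)] at hrw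
  rw [tsum_ite_eq w (fun _ => -(∑' y : Zd d, r2 p α w y))] at hrw
  linarith [hrw]

end GEN1

/-! ### triple ind bounds -/

lemma ind_triple_nonneg (a b c : Bool) : 0 ≤ ind a * (1 - ind b) * ind c := by
  cases a <;> cases b <;> cases c <;> norm_num [ind]
lemma ind_triple_le_one (a b c : Bool) : ind a * (1 - ind b) * ind c ≤ 1 := by
  cases a <;> cases b <;> cases c <;> norm_num [ind]
lemma ind_triple_self1 (a c : Bool) : ind a * (1 - ind a) * ind c = 0 := by
  cases a <;> cases c <;> norm_num [ind]
lemma ind_triple_self2 (a b : Bool) : ind a * (1 - ind b) * ind b = 0 := by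
  cases a <;> cases b <;> norm_num [ind]

section GEN2
variable {d : ℕ} {p : Zd d → ℝ} {α : Zd d → ℝ} {μ : Measure (Conf d)}

noncomputable def C2 (p : Zd d → ℝ) (v w : Zd d) (x : Zd d) (η : Conf d) : ℝ :=
  if x = v then -(∑' y : Zd d, p (y - v) * (ind (η v) * (1 - ind (η y)) * ind (η w)))
  else if x = w then -(∑' y : Zd d, p (y - w) * (ind (η w) * (1 - ind (η y)) * ind (η v)))
  else p (v - x) * (ind (η x) * (1 - ind (η v)) * ind (η w))
      + p (w - x) * (ind (η x) * (1 - ind (η w)) * ind (η v))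

lemma C2_v (v w : Zd d) (η : Conf d) :
    C2 p v w v η = -(∑' y : Zd d, p (y - v) * (ind (η v) * (1 - ind (η y)) * ind (η w))) :=
  if_pos rfl

lemma C2_w {v w : Zd d} (hvw : v ≠ w) (η : Conf d) :
    C2 p v w w η = -(∑' y : Zd d, p (y - w) * (ind (η w) * (1 - ind (η y)) * ind (η v))) := by
  unfold C2; rw [if_neg (fun h => hvw h.symm), if_pos rfl]

lemma C2_ne {v w x : Zd d} (hxv : x ≠ v) (hxw : x ≠ w) (η : Conf d) :
    C2 p v w x η = p (v - x) * (ind (η x) * (1 - ind (η v)) * ind (η w))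
      + p (w - x) * (ind (η x) * (1 - ind (η w)) * ind (η v)) := by
  unfold C2; rw [if_neg hxv, if_neg hxw]

variable (hp0 : ∀ z, 0 ≤ p z) (hp1 : ∑' z : Zd d, p z = 1)

include hp0 hp1 in
lemma gen_two_point {v w : Zd d} (hvw : v ≠ w) (η : Conf d) :
    gen p (fun η => ind (η v) * ind (η w)) η = ∑' x : Zd d, C2 p v w x η := by
  classical
  unfold gen
  refine tsum_congr (fun x => ?_)
  by_cases hxv : x = v
  · subst hxv
    rw [C2_v, ← tsum_neg]
    refine tsum_congr (fun y => ?_)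
    show p (y - x) * ind (η x) * (1 - ind (η y)) *
        (ind (swap η x y x) * ind (swap η x y w) - ind (η x) * ind (η w))
      = -(p (y - x) * (ind (η x) * (1 - ind (η y)) * ind (η w)))
    rw [swap_apply_fst]
    by_cases hyx : y = x
    · subst hyx
      rw [swap_self]
      cases hy : η y <;> cases hw : η w <;> simp [ind, hy, hw]
    · by_cases hyw : y = w
      · subst hyw
        rw [swap_apply_snd η x y hyx]
        cases hx : η x <;> cases hy : η y <;> simp [ind, hx, hy]
      · rw [swap_apply_notmem η x y w (fun h => hvw h.symm) (fun h => hyw h.symm)]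
        cases hx : η x <;> cases hy : η y <;> cases hw : η w <;>
          simp [ind, hx, hy, hw]
  · by_cases hxw : x = w
    · subst hxw
      rw [C2_w hvw, ← tsum_neg]
      refine tsum_congr (fun y => ?_)
      show p (y - x) * ind (η x) * (1 - ind (η y)) *
          (ind (swap η x y v) * ind (swap η x y x) - ind (η v) * ind (η x))
        = -(p (y - x) * (ind (η x) * (1 - ind (η y)) * ind (η v)))
      rw [swap_apply_fst]
      by_cases hyx : y = x
      · subst hyx
        rw [swap_self]
        cases hy : η y <;> cases hv : η v <;> simp [ind, hy, hv]
      · by_cases hyv : y = v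
        · subst hyv
          rw [swap_apply_snd η x y hyx]
          cases hx : η x <;> cases hy : η y <;> simp [ind, hx, hy]
        · rw [swap_apply_notmem η x y v (fun h => hxv h.symm) (fun h => hyv h.symm)]
          cases hx : η x <;> cases hy : η y <;> cases hv : η v <;>
            simp [ind, hx, hy, hv]
    · rw [C2_ne hxv hxw]
      rw [tsum_eq_sum (s := {v, w}) ?_]
      · rw [Finset.sum_pair hvw]
        have hv : p (v - x) * ind (η x) * (1 - ind (η v)) *
            (ind (swap η x v v) * ind (swap η x v w) - ind (η v) * ind (η w))
            = p (v - x) * (ind (η x) * (1 - ind (η v)) * ind (η w)) := by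
          rw [swap_apply_snd η x v (fun h => hxv h.symm),
            swap_apply_notmem η x v w (fun h => hxw h.symm) (fun h => hvw h.symm)]
          cases hx : η x <;> cases hv : η v <;> cases hw : η w <;>
            simp [ind, hx, hv, hw]
        have hw : p (w - x) * ind (η x) * (1 - ind (η w)) *
            (ind (swap η x w v) * ind (swap η x w w) - ind (η v) * ind (η w))
            = p (w - x) * (ind (η x) * (1 - ind (η w)) * ind (η v)) := by
          rw [swap_apply_snd η x w (fun h => hxw h.symm),
            swap_apply_notmem η x w v (fun h => hxv h.symm) (fun h => hvw h)]
          cases hx : η x <;> cases hv : η v <;> cases hw : η w <;>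
            simp [ind, hx, hv, hw]
        exact congrArg₂ (· + ·) hv hw
      · intro y hy
        simp only [Finset.mem_insert, Finset.mem_singleton] at hy
        push_neg at hy
        show p (y - x) * ind (η x) * (1 - ind (η y)) *
            (ind (swap η x y v) * ind (swap η x y w) - ind (η v) * ind (η w)) = 0
        by_cases hyx : y = x
        · subst hyx; rw [swap_self]; ring_nf
        · rw [swap_apply_notmem η x y v (fun h => hxv h.symm) (fun h => hy.1 h.symm),
            swap_apply_notmem η x y w (fun h => hxw h.symm) (fun h => hy.2 h.symm)]
          ring_nf

include hp0 hp1 in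
lemma C2_meas (v w : Zd d) (x : Zd d) : Measurable (C2 p v w x) := by
  classical
  have hm : ∀ (a b c : Zd d) (q : ℝ), Measurable (fun η : Conf d =>
      q * (ind (η a) * (1 - ind (η b)) * ind (η c))) := fun a b c q =>
    measurable_const.mul (((measurable_ind_eval _).mul
      (measurable_const.sub (measurable_ind_eval _))).mul (measurable_ind_eval _))
  by_cases hxv : x = v
  · subst hxv
    rw [show C2 p x w x = fun η =>
        -(∑' y : Zd d, p (y - x) * (ind (η x) * (1 - ind (η y)) * ind (η w))) from
      funext (fun η => C2_v x w η)]
    refine Measurable.neg (measurable_tsum (fun y => hm _ _ _ _) (fun η => ?_))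
    exact Summable.of_nonneg_of_le
      (fun y => mul_nonneg (hp0 _) (ind_triple_nonneg _ _ _))
      (fun y => mul_le_of_le_one_right (hp0 _) (ind_triple_le_one _ _ _))
      (summable_p_shift_right hp1 x)
  · by_cases hxw : x = w
    · subst hxw
      rw [show C2 p v x x = fun η =>
          -(∑' y : Zd d, p (y - x) * (ind (η x) * (1 - ind (η y)) * ind (η v))) from
        funext (fun η => C2_w (fun h => hxv h.symm) η)]
      refine Measurable.neg (measurable_tsum (fun y => hm _ _ _ _) (fun η => ?_))
      exact Summable.of_nonneg_of_le
        (fun y => mul_nonneg (hp0 _) (ind_triple_nonneg _ _ _))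
        (fun y => mul_le_of_le_one_right (hp0 _) (ind_triple_le_one _ _ _))
        (summable_p_shift_right hp1 x)
    · rw [show C2 p v w x = fun η =>
          p (v - x) * (ind (η x) * (1 - ind (η v)) * ind (η w))
          + p (w - x) * (ind (η x) * (1 - ind (η w)) * ind (η v)) from
        funext (fun η => C2_ne hxv hxw η)]
      exact (hm _ _ _ _).add (hm _ _ _ _)

noncomputable def bnd2 (p : Zd d → ℝ) (v w : Zd d) (x : Zd d) : ℝ :=
  if x = v then 1 else if x = w then 1 else p (v - x) + p (w - x)

include hp0 hp1 in
lemma C2_bound (v w : Zd d) (x : Zd d) (η : Conf d) : ‖C2 p v w x η‖ ≤ bnd2 p v w x := by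
  classical
  have hsum : ∀ c : Zd d, Summable (fun y : Zd d =>
      p (y - c) * (ind (η c) * (1 - ind (η y)) * ind (η (if c = v then w else v)))) := by
    intro c
    exact Summable.of_nonneg_of_le
      (fun y => mul_nonneg (hp0 _) (ind_triple_nonneg _ _ _))
      (fun y => mul_le_of_le_one_right (hp0 _) (ind_triple_le_one _ _ _))
      (summable_p_shift_right hp1 c)
  have habs : ∀ (c e : Zd d),
      ‖∑' y : Zd d, p (y - c) * (ind (η c) * (1 - ind (η y)) * ind (η e))‖ ≤ 1 := by
    intro c e
    rw [Real.norm_eq_abs, abs_of_nonneg (tsum_nonneg (fun y =>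
      mul_nonneg (hp0 _) (ind_triple_nonneg _ _ _)))]
    calc (∑' y : Zd d, p (y - c) * (ind (η c) * (1 - ind (η y)) * ind (η e)))
        ≤ ∑' y : Zd d, p (y - c) := by
          apply Summable.tsum_le_tsum (fun y =>
            mul_le_of_le_one_right (hp0 _) (ind_triple_le_one _ _ _)) ?_
            (summable_p_shift_right hp1 c)
          exact Summable.of_nonneg_of_le
            (fun y => mul_nonneg (hp0 _) (ind_triple_nonneg _ _ _))
            (fun y => mul_le_of_le_one_right (hp0 _) (ind_triple_le_one _ _ _))
            (summable_p_shift_right hp1 c)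
      _ = 1 := tsum_p_shift_right hp1 c
  unfold bnd2
  by_cases hxv : x = v
  · subst hxv
    rw [C2_v, if_pos rfl, norm_neg]
    exact habs x w
  · by_cases hxw : x = w
    · subst hxw
      rw [C2_w (fun h => hxv h.symm), if_neg hxv, if_pos rfl, norm_neg]
      exact habs x v
    · rw [C2_ne hxv hxw, if_neg hxv, if_neg hxw]
      have h1 : 0 ≤ p (v - x) * (ind (η x) * (1 - ind (η v)) * ind (η w)) :=
        mul_nonneg (hp0 _) (ind_triple_nonneg _ _ _)
      have h2 : 0 ≤ p (w - x) * (ind (η x) * (1 - ind (η w)) * ind (η v)) :=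
        mul_nonneg (hp0 _) (ind_triple_nonneg _ _ _)
      rw [Real.norm_eq_abs, abs_of_nonneg (by linarith)]
      have h3 : p (v - x) * (ind (η x) * (1 - ind (η v)) * ind (η w)) ≤ p (v - x) :=
        mul_le_of_le_one_right (hp0 _) (ind_triple_le_one _ _ _)
      have h4 : p (w - x) * (ind (η x) * (1 - ind (η w)) * ind (η v)) ≤ p (w - x) :=
        mul_le_of_le_one_right (hp0 _) (ind_triple_le_one _ _ _)
      linarith

include hp0 in
lemma bnd2_nonneg (v w : Zd d) (x : Zd d) : 0 ≤ bnd2 p v w x := by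
  unfold bnd2; split_ifs
  · norm_num
  · norm_num
  · exact add_nonneg (hp0 _) (hp0 _)

include hp1 in
lemma bnd2_summable {v w : Zd d} (hvw : v ≠ w) : Summable (bnd2 p v w) := by
  classical
  have h1 : Summable (fun x : Zd d => p (v - x) + p (w - x)) :=
    (summable_p_shift_left hp1 v).add (summable_p_shift_left hp1 w)
  have h2 : Summable (fun x : Zd d =>
      (if x = v then 1 - (p (v - v) + p (w - v)) else 0)
      + (if x = w then 1 - (p (v - w) + p (w - w)) else 0)) :=
    ((hasSum_ite_eq v _).summable).add ((hasSum_ite_eq w _).summable)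
  have : bnd2 p v w = fun x => (p (v - x) + p (w - x))
      + ((if x = v then 1 - (p (v - v) + p (w - v)) else 0)
        + (if x = w then 1 - (p (v - w) + p (w - w)) else 0)) := by
    funext x
    unfold bnd2
    by_cases hxv : x = v
    · subst hxv
      have hxw : x ≠ w := hvw
      simp [hxw]
    · by_cases hxw : x = w
      · subst hxw
        simp [hxv]
      · simp [hxv, hxw]
  rw [this]
  exact h1.add h2


variable (hα : ∀ x, α x ∈ Set.Ioo (0 : ℝ) 1) (hμ : IsProductWith α μ)

noncomputable def s1f (p α : Zd d → ℝ) (v w x : Zd d) : ℝ :=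
  if x = v then 0 else if x = w then 0 else p (v - x) * (α x * (1 - α v) * α w)
noncomputable def s2f (p α : Zd d → ℝ) (v w x : Zd d) : ℝ :=
  if x = v then 0 else if x = w then 0 else p (w - x) * (α x * (1 - α w) * α v)
noncomputable def avf (p α : Zd d → ℝ) (v w y : Zd d) : ℝ :=
  if y = v then 0 else if y = w then 0 else p (y - v) * (α v * (1 - α y) * α w)
noncomputable def awf (p α : Zd d → ℝ) (v w y : Zd d) : ℝ :=
  if y = v then 0 else if y = w then 0 else p (y - w) * (α w * (1 - α y) * α v)

include hα in
lemma alpha_triple_nonneg (x v w : Zd d) : 0 ≤ α x * (1 - α v) * α w := by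
  have h1 := hα x; have h2 := hα v; have h3 := hα w
  rw [Set.mem_Ioo] at h1 h2 h3
  exact mul_nonneg (mul_nonneg (le_of_lt h1.1) (by linarith)) (le_of_lt h3.1)

include hα in
lemma alpha_triple_le_one (x v w : Zd d) : α x * (1 - α v) * α w ≤ 1 := by
  have h1 := hα x; have h2 := hα v; have h3 := hα w
  rw [Set.mem_Ioo] at h1 h2 h3
  have ha : α x * (1 - α v) ≤ 1 :=
    mul_le_one₀ (le_of_lt h1.2) (by linarith) (by linarith)
  exact mul_le_one₀ ha (le_of_lt h3.1) (le_of_lt h3.2)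

include hp0 hα in
lemma s1f_nonneg (v w x : Zd d) : 0 ≤ s1f p α v w x := by
  unfold s1f; split_ifs
  · exact le_refl 0
  · exact le_refl 0
  · exact mul_nonneg (hp0 _) (alpha_triple_nonneg hα _ _ _)

include hp0 hα in
lemma s2f_nonneg (v w x : Zd d) : 0 ≤ s2f p α v w x := by
  unfold s2f; split_ifs
  · exact le_refl 0
  · exact le_refl 0
  · exact mul_nonneg (hp0 _) (alpha_triple_nonneg hα _ _ _)

include hp0 hα in
lemma avf_nonneg (v w y : Zd d) : 0 ≤ avf p α v w y := by
  unfold avf; split_ifs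
  · exact le_refl 0
  · exact le_refl 0
  · exact mul_nonneg (hp0 _) (alpha_triple_nonneg hα _ _ _)

include hp0 hα in
lemma awf_nonneg (v w y : Zd d) : 0 ≤ awf p α v w y := by
  unfold awf; split_ifs
  · exact le_refl 0
  · exact le_refl 0
  · exact mul_nonneg (hp0 _) (alpha_triple_nonneg hα _ _ _)

include hp0 hp1 hα in
lemma s1f_summable (v w : Zd d) : Summable (s1f p α v w) := by
  apply Summable.of_nonneg_of_le (s1f_nonneg hp0 hα v w) ?_ (summable_p_shift_left hp1 v)
  intro x
  unfold s1f; split_ifs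
  · exact hp0 _
  · exact hp0 _
  · exact mul_le_of_le_one_right (hp0 _) (alpha_triple_le_one hα _ _ _)

include hp0 hp1 hα in
lemma s2f_summable (v w : Zd d) : Summable (s2f p α v w) := by
  apply Summable.of_nonneg_of_le (s2f_nonneg hp0 hα v w) ?_ (summable_p_shift_left hp1 w)
  intro x
  unfold s2f; split_ifs
  · exact hp0 _
  · exact hp0 _
  · exact mul_le_of_le_one_right (hp0 _) (alpha_triple_le_one hα _ _ _)

include hp0 hp1 hα in
lemma avf_summable (v w : Zd d) : Summable (avf p α v w) := by
  apply Summable.of_nonneg_of_le (avf_nonneg hp0 hα v w) ?_ (summable_p_shift_right hp1 v)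
  intro x
  unfold avf; split_ifs
  · exact hp0 _
  · exact hp0 _
  · exact mul_le_of_le_one_right (hp0 _) (alpha_triple_le_one hα _ _ _)

include hp0 hp1 hα in
lemma awf_summable (v w : Zd d) : Summable (awf p α v w) := by
  apply Summable.of_nonneg_of_le (awf_nonneg hp0 hα v w) ?_ (summable_p_shift_right hp1 w)
  intro x
  unfold awf; split_ifs
  · exact hp0 _
  · exact hp0 _
  · exact mul_le_of_le_one_right (hp0 _) (alpha_triple_le_one hα _ _ _)

include hp0 hp1 hα hμ in
lemma integral_tsum_triple {c e : Zd d} (hce : c ≠ e) :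
    ∫ η, (∑' y : Zd d, p (y - c) * (ind (η c) * (1 - ind (η y)) * ind (η e))) ∂μ
      = ∑' y : Zd d, (if y = c then 0 else if y = e then 0
          else p (y - c) * (α c * (1 - α y) * α e)) := by
  have : IsProbabilityMeasure μ := hμ.1
  rw [integral_tsum ?_ ?_]
  · refine tsum_congr (fun y => ?_)
    by_cases hyc : y = c
    · subst hyc
      rw [if_pos rfl]
      have : (fun η : Conf d => p (y - y) * (ind (η y) * (1 - ind (η y)) * ind (η e)))
          = fun _ => 0 := by
        funext η; rw [ind_triple_self1]; ring
      rw [this, integral_zero]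
    · by_cases hye : y = e
      · subst hye
        rw [if_neg hyc, if_pos rfl]
        have : (fun η : Conf d => p (y - c) * (ind (η c) * (1 - ind (η y)) * ind (η y)))
            = fun _ => 0 := by
          funext η; rw [ind_triple_self2]; ring
        rw [this, integral_zero]
      · rw [if_neg hyc, if_neg hye, integral_const_mul,
          exp_triple hα hμ (fun h => hyc h.symm) hce hye]
  · intro y
    exact (measurable_const.mul (((measurable_ind_eval _).mul
      (measurable_const.sub (measurable_ind_eval _))).mul
      (measurable_ind_eval _))).aestronglyMeasurable
  · apply tsum_lintegral_ne_top μ (b := fun y : Zd d => p (y - c))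
      (fun y => hp0 _) (summable_p_shift_right hp1 c)
    intro y η
    rw [Real.norm_eq_abs, abs_of_nonneg (mul_nonneg (hp0 _) (ind_triple_nonneg _ _ _))]
    exact mul_le_of_le_one_right (hp0 _) (ind_triple_le_one _ _ _)

include hp0 hp1 hα hμ in
lemma integral_C2 {v w : Zd d} (hvw : v ≠ w) (x : Zd d) :
    ∫ η, C2 p v w x η ∂μ = (s1f p α v w x + s2f p α v w x)
      + ((if x = v then -(∑' y, avf p α v w y) else 0)
        + (if x = w then -(∑' y, awf p α v w y) else 0)) := by
  classical
  have : IsProbabilityMeasure μ := hμ.1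
  by_cases hxv : x = v
  · subst hxv
    have hxw : x ≠ w := hvw
    rw [show C2 p x w x = fun η =>
        -(∑' y : Zd d, p (y - x) * (ind (η x) * (1 - ind (η y)) * ind (η w))) from
      funext (fun η => C2_v x w η)]
    rw [integral_neg, integral_tsum_triple hp0 hp1 hα hμ hvw]
    unfold s1f s2f avf
    simp [hxw]
  · by_cases hxw : x = w
    · subst hxw
      rw [show C2 p v x x = fun η =>
          -(∑' y : Zd d, p (y - x) * (ind (η x) * (1 - ind (η y)) * ind (η v))) from
        funext (fun η => C2_w hvw η)]
      rw [integral_neg, integral_tsum_triple hp0 hp1 hα hμ (fun h => hvw h.symm)]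
      unfold s1f s2f awf
      have h1 : ∀ y : Zd d, (if y = x then (0:ℝ) else if y = v then 0
          else p (y - x) * (α x * (1 - α y) * α v))
          = (if y = v then 0 else if y = x then 0
          else p (y - x) * (α x * (1 - α y) * α v)) := by
        intro y
        by_cases h1 : y = x <;> by_cases h2 : y = v <;> simp [h1, h2, hxv]
      rw [tsum_congr h1]
      simp [hxv]
    · rw [show C2 p v w x = fun η =>
          p (v - x) * (ind (η x) * (1 - ind (η v)) * ind (η w))
          + p (w - x) * (ind (η x) * (1 - ind (η w)) * ind (η v)) from
        funext (fun η => C2_ne hxv hxw η)]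
      rw [integral_add
        ((integrable_triple hμ hxv hxw hvw).const_mul _)
        ((integrable_triple hμ hxw hxv (fun h => hvw h.symm)).const_mul _)]
      rw [integral_const_mul, integral_const_mul,
        exp_triple hα hμ hxv hxw hvw,
        exp_triple hα hμ hxw hxv (fun h => hvw h.symm)]
      unfold s1f s2f
      simp [hxv, hxw]

include hp0 hp1 hα hμ in
lemma stationary_two_point (hstat : IsStationary p μ) {v w : Zd d} (hvw : v ≠ w) :
    (∑' x, s1f p α v w x) + (∑' x, s2f p α v w x)
      = (∑' y, avf p α v w y) + (∑' y, awf p α v w y) := by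
  classical
  have : IsProbabilityMeasure μ := hμ.1
  have hcyl : IsCylinder (fun η : Conf d => ind (η v) * ind (η w)) := by
    refine ⟨{v, w}, fun η η' h => ?_⟩
    have hv := h v (by simp)
    have hw := h w (by simp)
    show ind (η v) * ind (η w) = ind (η' v) * ind (η' w)
    rw [hv, hw]
  have h0 : ∫ η, gen p (fun η => ind (η v) * ind (η w)) η ∂μ = 0 := hstat _ hcyl
  have hrw : ∫ η, (∑' x : Zd d, C2 p v w x η) ∂μ = 0 := by
    rw [← h0]
    exact integral_congr_ae (Filter.EventuallyEq.of_eq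
      (funext (fun η => (gen_two_point hp0 hp1 hvw η).symm)))
  rw [integral_tsum (fun x => (C2_meas hp0 hp1 v w x).aestronglyMeasurable)
    (tsum_lintegral_ne_top μ (bnd2_nonneg hp0 v w) (bnd2_summable hp1 hvw)
      (fun x η => C2_bound hp0 hp1 v w x η))] at hrw
  rw [tsum_congr (fun x => integral_C2 hp0 hp1 hα hμ hvw x)] at hrw
  rw [Summable.tsum_add ((s1f_summable hp0 hp1 hα v w).add (s2f_summable hp0 hp1 hα v w))
    (((hasSum_ite_eq v _).summable).add ((hasSum_ite_eq w _).summable))] at hrw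
  rw [Summable.tsum_add (s1f_summable hp0 hp1 hα v w) (s2f_summable hp0 hp1 hα v w)] at hrw
  rw [Summable.tsum_add ((hasSum_ite_eq v _).summable) ((hasSum_ite_eq w _).summable)] at hrw
  rw [tsum_ite_eq v (fun _ => -(∑' y, avf p α v w y)), tsum_ite_eq w (fun _ => -(∑' y, awf p α v w y))] at hrw
  linarith [hrw]

end GEN2

section FIN
variable {d : ℕ} {p α : Zd d → ℝ} {μ : Measure (Conf d)}
  (hp0 : ∀ z, 0 ≤ p z) (hp1 : ∑' z : Zd d, p z = 1)
  (hα : ∀ x, α x ∈ Set.Ioo (0 : ℝ) 1)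
  (hμ : IsProductWith α μ) (hstat : IsStationary p μ)

/-! ### basic pifun facts -/

include hα in
lemma one_sub_alpha_pos (x : Zd d) : 0 < 1 - α x := by
  have := (hα x).2; linarith

include hα in
lemma pifun_pos (x : Zd d) : 0 < pifun α x :=
  div_pos (hα x).1 (one_sub_alpha_pos hα x)

lemma pifun_congr {a b : Zd d} (h : α a = α b) : pifun α a = pifun α b := by
  unfold pifun; rw [h]

/-! ### the pair balance dichotomy -/

include hp0 hp1 hα hμ hstat in
lemma pair_balance {v w : Zd d} (hvw : v ≠ w) :
    α v = α w ∨
    p (w - v) * (α v * (1 - α w)) = p (v - w) * (α w * (1 - α v)) := by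
  classical
  have hE2 := stationary_two_point hp0 hp1 hα hμ hstat hvw
  have hE1v := stationary_one_point hp0 hp1 hα hμ hstat v
  have hE1w := stationary_one_point hp0 hp1 hα hμ hstat w
  have hs1 : ∑' x, s1f p α v w x = α w * (∑' x, r1 p α v x)
      - (p (v - w) * (α w * (1 - α v))) * α w := by
    have hpt : ∀ x, s1f p α v w x = α w * r1 p α v x
        - (if x = w then (p (v - w) * (α w * (1 - α v))) * α w else 0) := by
      intro x
      unfold s1f r1
      rcases eq_or_ne x v with hxv | hxv
      · subst hxv; simp [hvw]
      · rcases eq_or_ne x w with hxw | hxw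
        · subst hxw; simp [hxv]; ring
        · simp [hxv, hxw]; ring
    rw [tsum_congr hpt,
      Summable.tsum_sub (f := fun x : Zd d => α w * r1 p α v x)
        (g := fun x : Zd d => if x = w then (p (v - w) * (α w * (1 - α v))) * α w else 0)
        (Summable.mul_left _ (r1_summable hp0 hp1 hα v))
        ((hasSum_ite_eq _ _).summable),
      tsum_mul_left, tsum_ite_eq _ _]
  have hav : ∑' y, avf p α v w y = α w * (∑' y, r2 p α v y)
      - (p (w - v) * (α v * (1 - α w))) * α w := by
    have hpt : ∀ y, avf p α v w y = α w * r2 p α v y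
        - (if y = w then (p (w - v) * (α v * (1 - α w))) * α w else 0) := by
      intro y
      unfold avf r2
      rcases eq_or_ne y v with hyv | hyv
      · subst hyv; simp [hvw]
      · rcases eq_or_ne y w with hyw | hyw
        · subst hyw; simp [hyv]; ring
        · simp [hyv, hyw]; ring
    rw [tsum_congr hpt,
      Summable.tsum_sub (f := fun y : Zd d => α w * r2 p α v y)
        (g := fun y : Zd d => if y = w then (p (w - v) * (α v * (1 - α w))) * α w else 0)
        (Summable.mul_left _ (r2_summable hp0 hp1 hα v))
        ((hasSum_ite_eq _ _).summable),
      tsum_mul_left, tsum_ite_eq _ _]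
  have hs2 : ∑' x, s2f p α v w x = α v * (∑' x, r1 p α w x)
      - (p (w - v) * (α v * (1 - α w))) * α v := by
    have hpt : ∀ x, s2f p α v w x = α v * r1 p α w x
        - (if x = v then (p (w - v) * (α v * (1 - α w))) * α v else 0) := by
      intro x
      unfold s2f r1
      rcases eq_or_ne x v with hxv | hxv
      · subst hxv; simp [hvw]; ring
      · rcases eq_or_ne x w with hxw | hxw
        · subst hxw; simp [hxv, hvw.symm]
        · simp [hxv, hxw]; ring
    rw [tsum_congr hpt,
      Summable.tsum_sub (f := fun x : Zd d => α v * r1 p α w x)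
        (g := fun x : Zd d => if x = v then (p (w - v) * (α v * (1 - α w))) * α v else 0)
        (Summable.mul_left _ (r1_summable hp0 hp1 hα w))
        ((hasSum_ite_eq _ _).summable),
      tsum_mul_left, tsum_ite_eq _ _]
  have haw : ∑' y, awf p α v w y = α v * (∑' y, r2 p α w y)
      - (p (v - w) * (α w * (1 - α v))) * α v := by
    have hpt : ∀ y, awf p α v w y = α v * r2 p α w y
        - (if y = v then (p (v - w) * (α w * (1 - α v))) * α v else 0) := by
      intro y
      unfold awf r2
      rcases eq_or_ne y v with hyv | hyv
      · subst hyv; simp [hvw]; ring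
      · rcases eq_or_ne y w with hyw | hyw
        · subst hyw; simp [hyv, hvw.symm]
        · simp [hyv, hyw]; ring
    rw [tsum_congr hpt,
      Summable.tsum_sub (f := fun y : Zd d => α v * r2 p α w y)
        (g := fun y : Zd d => if y = v then (p (v - w) * (α w * (1 - α v))) * α v else 0)
        (Summable.mul_left _ (r2_summable hp0 hp1 hα w))
        ((hasSum_ite_eq _ _).summable),
      tsum_mul_left, tsum_ite_eq _ _]
  rw [hs1, hs2, hav, haw, hE1v, hE1w] at hE2
  have key : (α v - α w) * (p (w - v) * (α v * (1 - α w)) - p (v - w) * (α w * (1 - α v)))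
      = 0 := by nlinarith [hE2]
  rcases mul_eq_zero.1 key with h | h
  · exact Or.inl (by linarith)
  · exact Or.inr (by linarith)

/-! ### the balance of p over level sets (***) -/

include hp0 hp1 hα hμ hstat in
lemma level_balance (w : Zd d) :
    ∑' x : Zd d, (if α x = α w then p (w - x) else 0)
      = ∑' x : Zd d, (if α x = α w then p (x - w) else 0) := by
  classical
  have hcpos : 0 < α w * (1 - α w) := mul_pos (hα w).1 (one_sub_alpha_pos hα w)
  have hq1s : Summable (fun x : Zd d => if α x = α w then p (w - x) else 0) := by
    apply Summable.of_nonneg_of_le (fun x => ?_) (fun x => ?_)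
      (summable_p_shift_left hp1 w)
    · split_ifs; exacts [hp0 _, le_refl 0]
    · split_ifs; exacts [le_refl _, hp0 _]
  have hq2s : Summable (fun x : Zd d => if α x = α w then p (x - w) else 0) := by
    apply Summable.of_nonneg_of_le (fun x => ?_) (fun x => ?_)
      (summable_p_shift_right hp1 w)
    · split_ifs; exacts [hp0 _, le_refl 0]
    · split_ifs; exacts [le_refl _, hp0 _]
  have hb1s : Summable (fun x : Zd d => p (w - x) * (α x * (1 - α w))) := by
    apply Summable.of_nonneg_of_le (fun x => ?_) (fun x => ?_)
      (summable_p_shift_left hp1 w)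
    · exact mul_nonneg (hp0 _) (mul_nonneg (le_of_lt (hα x).1)
        (le_of_lt (one_sub_alpha_pos hα w)))
    · apply mul_le_of_le_one_right (hp0 _)
      have h1 := hα x; have h2 := hα w
      rw [Set.mem_Ioo] at h1 h2
      nlinarith [h1.1, h1.2, h2.1, h2.2]
  have hb2s : Summable (fun x : Zd d => p (x - w) * (α w * (1 - α x))) := by
    apply Summable.of_nonneg_of_le (fun x => ?_) (fun x => ?_)
      (summable_p_shift_right hp1 w)
    · exact mul_nonneg (hp0 _) (mul_nonneg (le_of_lt (hα w).1)
        (le_of_lt (one_sub_alpha_pos hα x)))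
    · apply mul_le_of_le_one_right (hp0 _)
      have h1 := hα x; have h2 := hα w
      rw [Set.mem_Ioo] at h1 h2
      nlinarith [h1.1, h1.2, h2.1, h2.2]
  -- extended one-point balance
  have hE1' : ∑' x : Zd d, p (w - x) * (α x * (1 - α w))
      = ∑' x : Zd d, p (x - w) * (α w * (1 - α x)) := by
    have h1 : ∀ x : Zd d, p (w - x) * (α x * (1 - α w))
        = r1 p α w x + (if x = w then p (w - w) * (α w * (1 - α w)) else 0) := by
      intro x
      unfold r1
      rcases eq_or_ne x w with hxw | hxw
      · subst hxw; simp
      · simp [hxw]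
    have h2 : ∀ x : Zd d, p (x - w) * (α w * (1 - α x))
        = r2 p α w x + (if x = w then p (w - w) * (α w * (1 - α w)) else 0) := by
      intro x
      unfold r2
      rcases eq_or_ne x w with hxw | hxw
      · subst hxw; simp
      · simp [hxw]
    rw [tsum_congr h1, tsum_congr h2,
      Summable.tsum_add (r1_summable hp0 hp1 hα w) ((hasSum_ite_eq w _).summable),
      Summable.tsum_add (r2_summable hp0 hp1 hα w) ((hasSum_ite_eq w _).summable),
      stationary_one_point hp0 hp1 hα hμ hstat w]
  -- pointwise comparison
  have hpt : ∀ x : Zd d, p (w - x) * (α x * (1 - α w))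
        - (α w * (1 - α w)) * (if α x = α w then p (w - x) else 0)
      = p (x - w) * (α w * (1 - α x))
        - (α w * (1 - α w)) * (if α x = α w then p (x - w) else 0) := by
    intro x
    by_cases h : α x = α w
    · rw [if_pos h, if_pos h, h]; ring
    · have hxw : x ≠ w := fun hx => h (by rw [hx])
      rcases pair_balance hp0 hp1 hα hμ hstat hxw with h' | h'
      · exact absurd h' h
      · rw [if_neg h, if_neg h, mul_zero, sub_zero, sub_zero]
        exact h'
  have hts := tsum_congr (L := SummationFilter.unconditional _) hpt
  rw [Summable.tsum_sub (f := fun x : Zd d => p (w - x) * (α x * (1 - α w)))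
      (g := fun x : Zd d => (α w * (1 - α w)) * (if α x = α w then p (w - x) else 0))
      hb1s (hq1s.mul_left _),
    Summable.tsum_sub (f := fun x : Zd d => p (x - w) * (α w * (1 - α x)))
      (g := fun x : Zd d => (α w * (1 - α w)) * (if α x = α w then p (x - w) else 0))
      hb2s (hq2s.mul_left _),
    tsum_mul_left, tsum_mul_left, hE1'] at hts
  have hq : (α w * (1 - α w)) * (∑' x : Zd d, if α x = α w then p (w - x) else 0)
      = (α w * (1 - α w)) * (∑' x : Zd d, if α x = α w then p (x - w) else 0) := by
    linarith
  exact mul_left_cancel₀ (ne_of_gt hcpos) hq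

/-! ### harmonicity of pifun -/

include hp0 hp1 hα hμ hstat in
lemma pifun_harmonic_ptwise (x y : Zd d) :
    p (x - y) * pifun α y
      = pifun α x * ((if α y = α x then p (x - y) else 0) + p (y - x)
          - (if α y = α x then p (y - x) else 0)) := by
  by_cases h : α y = α x
  · rw [if_pos h, if_pos h, pifun_congr h]
    ring
  · rw [if_neg h, if_neg h]
    have hyx : y ≠ x := fun hy => h (by rw [hy])
    rcases pair_balance hp0 hp1 hα hμ hstat hyx with h' | h'
    · exact absurd h' h
    · -- p (x - y) * (α y * (1 - α x)) = p (y - x) * (α x * (1 - α y))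
      have hx1 : (1 - α x) ≠ 0 := ne_of_gt (one_sub_alpha_pos hα x)
      have hy1 : (1 - α y) ≠ 0 := ne_of_gt (one_sub_alpha_pos hα y)
      unfold pifun
      rw [zero_add, sub_zero]
      field_simp
      linear_combination h'

include hp0 hp1 hα hμ hstat in
lemma pifun_harmonic_summable (x : Zd d) :
    Summable (fun y : Zd d => p (x - y) * pifun α y) := by
  classical
  rw [show (fun y : Zd d => p (x - y) * pifun α y)
      = fun y => pifun α x * ((if α y = α x then p (x - y) else 0) + p (y - x)
          - (if α y = α x then p (y - x) else 0)) from
    funext (fun y => pifun_harmonic_ptwise hp0 hp1 hα hμ hstat x y)]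
  apply Summable.mul_left
  apply Summable.sub
  · apply Summable.add ?_ (summable_p_shift_right hp1 x)
    apply Summable.of_nonneg_of_le (fun y => ?_) (fun y => ?_)
      (summable_p_shift_left hp1 x)
    · split_ifs; exacts [hp0 _, le_refl 0]
    · split_ifs; exacts [le_refl _, hp0 _]
  · apply Summable.of_nonneg_of_le (fun y => ?_) (fun y => ?_)
      (summable_p_shift_right hp1 x)
    · split_ifs; exacts [hp0 _, le_refl 0]
    · split_ifs; exacts [le_refl _, hp0 _]

include hp0 hp1 hα hμ hstat in
lemma pifun_harmonic (x : Zd d) :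
    ∑' y : Zd d, p (x - y) * pifun α y = pifun α x := by
  classical
  have hq1s : Summable (fun y : Zd d => if α y = α x then p (x - y) else 0) := by
    apply Summable.of_nonneg_of_le (fun y => ?_) (fun y => ?_)
      (summable_p_shift_left hp1 x)
    · split_ifs; exacts [hp0 _, le_refl 0]
    · split_ifs; exacts [le_refl _, hp0 _]
  have hq2s : Summable (fun y : Zd d => if α y = α x then p (y - x) else 0) := by
    apply Summable.of_nonneg_of_le (fun y => ?_) (fun y => ?_)
      (summable_p_shift_right hp1 x)
    · split_ifs; exacts [hp0 _, le_refl 0]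
    · split_ifs; exacts [le_refl _, hp0 _]
  rw [tsum_congr (fun y => pifun_harmonic_ptwise hp0 hp1 hα hμ hstat x y)]
  rw [tsum_mul_left]
  rw [Summable.tsum_sub (f := fun y : Zd d => (if α y = α x then p (x - y) else 0) + p (y - x))
      (g := fun y : Zd d => if α y = α x then p (y - x) else 0)
      (hq1s.add (summable_p_shift_right hp1 x)) hq2s,
    Summable.tsum_add (f := fun y : Zd d => if α y = α x then p (x - y) else 0)
      (g := fun y : Zd d => p (y - x))
      hq1s (summable_p_shift_right hp1 x),
    tsum_p_shift_right hp1 x, level_balance hp0 hp1 hα hμ hstat x]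
  ring


/-! ### shifted harmonicity -/

include hp0 hp1 hα hμ hstat in
lemma harmonic_shift_summable (x u : Zd d) :
    Summable (fun y : Zd d => p (x - y) * pifun α (y + u)) := by
  have hg : Summable (fun z : Zd d => p (x + u - z) * pifun α z) :=
    pifun_harmonic_summable hp0 hp1 hα hμ hstat (x + u)
  have hfun : (fun y : Zd d => p (x - y) * pifun α (y + u))
      = (fun z : Zd d => p (x + u - z) * pifun α z) ∘ (Equiv.addRight u) := by
    funext y
    show p (x - y) * pifun α (y + u) = p (x + u - (y + u)) * pifun α (y + u)
    rw [show x + u - (y + u) = x - y from by abel]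
  rw [hfun]
  exact ((Equiv.addRight u).summable_iff).2 hg

include hp0 hp1 hα hμ hstat in
lemma harmonic_shift (x u : Zd d) :
    ∑' y : Zd d, p (x - y) * pifun α (y + u) = pifun α (x + u) := by
  have hfun : (fun y : Zd d => p (x - y) * pifun α (y + u))
      = (fun z : Zd d => p (x + u - z) * pifun α z) ∘ (Equiv.addRight u) := by
    funext y
    show p (x - y) * pifun α (y + u) = p (x + u - (y + u)) * pifun α (y + u)
    rw [show x + u - (y + u) = x - y from by abel]
  calc ∑' y : Zd d, p (x - y) * pifun α (y + u)
      = ∑' y : Zd d, ((fun z : Zd d => p (x + u - z) * pifun α z) ∘ (Equiv.addRight u)) y := by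
        rw [hfun]
    _ = ∑' z : Zd d, p (x + u - z) * pifun α z :=
        (Equiv.addRight u).tsum_eq (fun z : Zd d => p (x + u - z) * pifun α z)
    _ = pifun α (x + u) := pifun_harmonic hp0 hp1 hα hμ hstat (x + u)

/-! ### the dichotomy along u -/

include hp0 hp1 hα hμ hstat in
lemma dichotomy {u : Zd d} (hmu : 0 < p (-u)) (hune : u ≠ 0) (y : Zd d) :
    pifun α (y + u) = pifun α y ∨ pifun α (y + u) = (p u / p (-u)) * pifun α y := by
  have hne : y ≠ y + u := fun h => hune (by simpa using (left_eq_add.1 h))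
  rcases pair_balance hp0 hp1 hα hμ hstat hne with h | h
  · exact Or.inl (pifun_congr h).symm
  · right
    rw [show (y + u) - y = u from by abel, show y - (y + u) = -u from by abel] at h
    have h1 : (1 - α y) ≠ 0 := ne_of_gt (one_sub_alpha_pos hα y)
    have h2 : (1 - α (y + u)) ≠ 0 := ne_of_gt (one_sub_alpha_pos hα (y + u))
    have h3 : p (-u) ≠ 0 := ne_of_gt hmu
    unfold pifun
    field_simp
    linear_combination -h

/-! ### propagation -/

include hp0 hp1 hα hμ hstat in
lemma propagate {u : Zd d} (hpu : 0 < p u) (hmu : 0 < p (-u)) (hune : u ≠ 0) (x : Zd d)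
    (hx : pifun α (x + u) = pifun α x) :
    ∀ y : Zd d, p (x - y) ≠ 0 → pifun α (y + u) = pifun α y := by
  have hsum1 : Summable (fun y : Zd d => p (x - y) * pifun α (y + u)) :=
    harmonic_shift_summable hp0 hp1 hα hμ hstat x u
  have hsum2 : Summable (fun y : Zd d => p (x - y) * pifun α y) :=
    pifun_harmonic_summable hp0 hp1 hα hμ hstat x
  have hT : Summable (fun y : Zd d =>
      p (x - y) * pifun α (y + u) - p (x - y) * pifun α y) := hsum1.sub hsum2
  have htsum : ∑' y : Zd d, (p (x - y) * pifun α (y + u) - p (x - y) * pifun α y) = 0 := by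
    rw [Summable.tsum_sub (f := fun y : Zd d => p (x - y) * pifun α (y + u))
      (g := fun y : Zd d => p (x - y) * pifun α y) hsum1 hsum2,
      harmonic_shift hp0 hp1 hα hμ hstat x u, pifun_harmonic hp0 hp1 hα hμ hstat x, hx, sub_self]
  have hzero : ∀ y : Zd d, p (x - y) * pifun α (y + u) - p (x - y) * pifun α y = 0 := by
    rcases le_total 1 (p u / p (-u)) with hlam | hlam
    · -- all terms nonneg
      have hnn : ∀ y : Zd d,
          0 ≤ p (x - y) * pifun α (y + u) - p (x - y) * pifun α y := by
        intro y
        rcases dichotomy hp0 hp1 hα hμ hstat hmu hune y with h | h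
        · rw [h]; simp
        · rw [h]
          have := pifun_pos hα y
          have hp' := hp0 (x - y)
          nlinarith [mul_nonneg (mul_nonneg hp' (le_of_lt this)) (sub_nonneg.2 hlam)]
      intro y
      have h1 : p (x - y) * pifun α (y + u) - p (x - y) * pifun α y
          ≤ ∑' z : Zd d, (p (x - z) * pifun α (z + u) - p (x - z) * pifun α z) :=
        Summable.le_tsum hT y (fun j _ => hnn j)
      rw [htsum] at h1
      exact le_antisymm h1 (hnn y)
    · -- all terms nonpos
      have hnp : ∀ y : Zd d,
          p (x - y) * pifun α (y + u) - p (x - y) * pifun α y ≤ 0 := by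
        intro y
        rcases dichotomy hp0 hp1 hα hμ hstat hmu hune y with h | h
        · rw [h]; simp
        · rw [h]
          have := pifun_pos hα y
          have hp' := hp0 (x - y)
          nlinarith [mul_nonneg (mul_nonneg hp' (le_of_lt this)) (sub_nonneg.2 hlam)]
      intro y
      have h1 : -(p (x - y) * pifun α (y + u) - p (x - y) * pifun α y)
          ≤ ∑' z : Zd d, -(p (x - z) * pifun α (z + u) - p (x - z) * pifun α z) :=
        Summable.le_tsum hT.neg y (fun j _ => neg_nonneg.2 (hnp j))
      rw [tsum_neg, htsum, neg_zero] at h1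
      have := hnp y
      linarith
  intro y hy
  have h := hzero y
  rw [← mul_sub] at h
  rcases mul_eq_zero.1 h with h' | h'
  · exact absurd h' hy
  · linarith [sub_eq_zero.1 h']

/-! ### line lemmas -/

include hp0 hp1 hα hμ hstat in
lemma A_step {u : Zd d} (hpu : 0 < p u) (hmu : 0 < p (-u)) (hune : u ≠ 0) (x : Zd d)
    (hx : pifun α (x + u) = pifun α x) :
    pifun α ((x + u) + u) = pifun α (x + u) ∧ pifun α ((x - u) + u) = pifun α (x - u) := by
  constructor
  · apply propagate hp0 hp1 hα hμ hstat hpu hmu hune x hx (x + u)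
    rw [show x - (x + u) = -u from by abel]
    exact ne_of_gt hmu
  · apply propagate hp0 hp1 hα hμ hstat hpu hmu hune x hx (x - u)
    rw [show x - (x - u) = u from by abel]
    exact ne_of_gt hpu

include hp0 hp1 hα hμ hstat in
lemma A_all {u : Zd d} (hpu : 0 < p u) (hmu : 0 < p (-u)) (hune : u ≠ 0) (x : Zd d)
    (hx : pifun α (x + u) = pifun α x) :
    ∀ n : ℤ, pifun α ((x + n • u) + u) = pifun α (x + n • u) := by
  intro n
  induction n using Int.induction_on with
  | zero => simpa using hx
  | succ n ih =>
    have heq : x + ((n : ℤ) + 1) • u = (x + (n : ℤ) • u) + u := by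
      rw [add_zsmul, one_zsmul, add_assoc]
    rw [heq]
    exact (A_step hp0 hp1 hα hμ hstat hpu hmu hune (x + (n : ℤ) • u) ih).1
  | pred n ih =>
    have heq : x + (-(n : ℤ) - 1) • u = (x + (-(n : ℤ)) • u) - u := by
      rw [sub_zsmul, one_zsmul]
      abel
    rw [heq]
    exact (A_step hp0 hp1 hα hμ hstat hpu hmu hune (x + (-(n : ℤ)) • u) ih).2

include hp0 hp1 hα hμ hstat in
lemma const_line {u : Zd d} (hpu : 0 < p u) (hmu : 0 < p (-u)) (hune : u ≠ 0) (x : Zd d)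
    (hx : pifun α (x + u) = pifun α x) :
    ∀ n : ℤ, pifun α (x + n • u) = pifun α x := by
  intro n
  induction n using Int.induction_on with
  | zero => simp
  | succ n ih =>
    have heq : x + ((n : ℤ) + 1) • u = (x + (n : ℤ) • u) + u := by
      rw [add_zsmul, one_zsmul, add_assoc]
    rw [heq]
    exact (A_all hp0 hp1 hα hμ hstat hpu hmu hune x hx n).trans ih
  | pred n ih =>
    have hAn := A_all hp0 hp1 hα hμ hstat hpu hmu hune x hx (-(n : ℤ) - 1)
    have heq : (x + (-(n : ℤ) - 1) • u) + u = x + (-(n : ℤ)) • u := by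
      rw [sub_zsmul, one_zsmul]
      abel
    rw [heq] at hAn
    exact hAn.symm.trans ih

include hp0 hp1 hα hμ hstat in
lemma geom_line {u : Zd d} (hpu : 0 < p u) (hmu : 0 < p (-u)) (hune : u ≠ 0) (x : Zd d)
    (hx : pifun α (x + u) ≠ pifun α x) :
    ∀ n : ℤ, pifun α (x + n • u) = pifun α x * (p u / p (-u)) ^ n := by
  have hlam0 : (p u / p (-u)) ≠ 0 := ne_of_gt (div_pos hpu hmu)
  have hnA : ∀ n : ℤ, pifun α ((x + n • u) + u) ≠ pifun α (x + n • u) := by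
    intro n hAn
    apply hx
    have h := A_all hp0 hp1 hα hμ hstat hpu hmu hune (x + n • u) hAn (-n)
    rw [show (x + n • u) + (-n) • u = x from by
      rw [add_assoc, ← add_zsmul, show n + -n = 0 from by ring, zero_zsmul, add_zero]] at h
    exact h
  have hstep : ∀ n : ℤ, pifun α ((x + n • u) + u)
      = (p u / p (-u)) * pifun α (x + n • u) := by
    intro n
    rcases dichotomy hp0 hp1 hα hμ hstat hmu hune (x + n • u) with h | h
    · exact absurd h (hnA n)
    · exact h
  intro n
  induction n using Int.induction_on with
  | zero => simp
  | succ n ih =>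
    have heq : x + ((n : ℤ) + 1) • u = (x + (n : ℤ) • u) + u := by
      rw [add_zsmul, one_zsmul, add_assoc]
    rw [heq, hstep n, ih, zpow_add_one₀ hlam0]
    ring
  | pred n ih =>
    have h := hstep (-(n : ℤ) - 1)
    have heq : (x + (-(n : ℤ) - 1) • u) + u = x + (-(n : ℤ)) • u := by
      rw [sub_zsmul, one_zsmul]
      abel
    rw [heq, ih] at h
    have hXX : pifun α (x + (-(n : ℤ) - 1) • u)
        = (p u / p (-u))⁻¹ * (pifun α x * (p u / p (-u)) ^ (-(n : ℤ))) := by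
      rw [h, ← mul_assoc, inv_mul_cancel₀ hlam0, one_mul]
    rw [hXX, zpow_sub_one₀ hlam0]
    ring

/-! ### the final theorem -/

include hp0 hp1 hα hμ hstat in
theorem final (u : Zd d) (hu : 0 < p u) :
    (p (-u) = 0 → ∀ x : Zd d, pifun α (x + u) = pifun α x) ∧
    (0 < p (-u) → ∀ x : Zd d,
      (∀ n : ℤ, pifun α (x + n • u) = pifun α x) ∨
      (∀ n : ℤ, pifun α (x + n • u) = pifun α x * (p u / p (-u)) ^ n)) := by
  constructor
  · intro hpm x
    have hune : u ≠ 0 := by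
      intro h
      rw [h, neg_zero, ← h] at hpm
      exact absurd hpm (ne_of_gt hu)
    have hne : x ≠ x + u := fun h => hune (by simpa using (left_eq_add.1 h))
    rcases pair_balance hp0 hp1 hα hμ hstat hne with h | h
    · exact (pifun_congr h).symm
    · exfalso
      rw [show (x + u) - x = u from by abel, show x - (x + u) = -u from by abel, hpm,
        zero_mul] at h
      have h1 := (hα x).1
      have h2 := one_sub_alpha_pos hα (x + u)
      exact absurd h (ne_of_gt (mul_pos hu (mul_pos h1 h2)))
  · intro hmu x
    by_cases hune : u = 0
    · left
      intro n
      rw [hune, smul_zero, add_zero]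
    · by_cases hA : pifun α (x + u) = pifun α x
      · exact Or.inl (const_line hp0 hp1 hα hμ hstat hu hmu hune x hA)
      · exact Or.inr (geom_line hp0 hp1 hα hμ hstat hu hmu hune x hA)


end FIN

theorem stationary_product_ratio_along_u {d : ℕ} (p : Zd d → ℝ)
    (hp0 : ∀ z, 0 ≤ p z) (hp1 : ∑' z : Zd d, p z = 1)
    (α : Zd d → ℝ) (hα : ∀ x, α x ∈ Set.Ioo (0 : ℝ) 1)
    (μ : Measure (Conf d)) (hμ : IsProductWith α μ) (hstat : IsStationary p μ)
    (u : Zd d) (hu : 0 < p u) :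
    (p (-u) = 0 → ∀ x : Zd d, pifun α (x + u) = pifun α x) ∧
    (0 < p (-u) → ∀ x : Zd d,
      (∀ n : ℤ, pifun α (x + n • u) = pifun α x) ∨
      (∀ n : ℤ, pifun α (x + n • u) = pifun α x * (p u / p (-u)) ^ n)) := by
  exact final hp0 hp1 hα hμ hstat u hu

end ExclusionPaper
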